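/- In the commuting (diagonal) setting, there exists a completely positive subunital map Λ with Λ(L_θ) = M_θ for all θ if and only if for every real vector (x_θ), max(λ_max(Σ_θ x_θ L_θ), 0) ≥ max(λ_max(Σ_θ x_θ M_θ), 0). -/

import Mathlib

open Matrix Finset
open scoped ComplexOrder

noncomputable section

/-- The rank-one operator `|u⟩⟨u|` as a matrix: `(outer u) i j = u i * conj (u j)`. -/
def outer {n : ℕ} (u : Fin n → ℂ) : Matrix (Fin n) (Fin n) ℂ :=
  Matrix.vecMulVec u (star u)

/-- A linear map on matrices is completely positive iff it admits a Kraus representation. -/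
def IsCPMap {n m : ℕ}
    (Λ : Matrix (Fin n) (Fin n) ℂ →ₗ[ℂ] Matrix (Fin m) (Fin m) ℂ) : Prop :=
  ∃ (k : ℕ) (W : Fin k → Matrix (Fin m) (Fin n) ℂ),
    ∀ X, Λ X = ∑ i, W i * X * (W i)ᴴ

/-- `Λ` is unital: `Λ(I) = I`. -/
def IsUnital {n m : ℕ}
    (Λ : Matrix (Fin n) (Fin n) ℂ →ₗ[ℂ] Matrix (Fin m) (Fin m) ℂ) : Prop :=
  Λ 1 = 1

/-- `Λ` is subunital: `Λ(I) ≤ I` in the Loewner order. -/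
def IsSubunital {n m : ℕ}
    (Λ : Matrix (Fin n) (Fin n) ℂ →ₗ[ℂ] Matrix (Fin m) (Fin m) ℂ) : Prop :=
  ((1 : Matrix (Fin m) (Fin m) ℂ) - Λ 1).PosSemidef

/-- Gram matrix of a family of vectors. -/
def gram {Θ : Type*} {n : ℕ} (u : Θ → (Fin n → ℂ)) : Matrix Θ Θ ℂ :=
  Matrix.of fun θ θ' => star (u θ) ⬝ᵥ u θ'

/-- Largest real eigenvalue of a matrix (intended for Hermitian matrices). -/
def lamMax {n : ℕ} (A : Matrix (Fin n) (Fin n) ℂ) : ℝ :=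
  sSup {r : ℝ | ∃ x : Fin n → ℂ, x ≠ 0 ∧ A.mulVec x = (r : ℂ) • x}

/-- Smallest real eigenvalue of a matrix (intended for Hermitian matrices). -/
def lamMin {n : ℕ} (A : Matrix (Fin n) (Fin n) ℂ) : ℝ :=
  sInf {r : ℝ | ∃ x : Fin n → ℂ, x ≠ 0 ∧ A.mulVec x = (r : ℂ) • x}

/-- Operator (spectral) norm of a matrix. -/
def opNorm {n : ℕ} (A : Matrix (Fin n) (Fin n) ℂ) : ℝ :=
  ‖Matrix.toEuclideanCLM (𝕜 := ℂ) A‖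

/-! ### Auxiliary lemmas -/

lemma eigenSet_diagonal {k : ℕ} (d : Fin k → ℝ) :
    {r : ℝ | ∃ x : Fin k → ℂ, x ≠ 0 ∧
        (Matrix.diagonal fun i => (d i : ℂ)).mulVec x = (r : ℂ) • x} = Set.range d := by
  ext r
  constructor
  · rintro ⟨x, hx, hEq⟩
    obtain ⟨i, hi⟩ := Function.ne_iff.mp hx
    refine ⟨i, ?_⟩
    have h1 := congrFun hEq i
    rw [Matrix.mulVec_diagonal] at h1
    have h2 : (d i : ℂ) = (r : ℂ) := by
      have := mul_right_cancel₀ hi h1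
      simpa using this
    exact_mod_cast h2
  · rintro ⟨i, rfl⟩
    refine ⟨Pi.single i 1, ?_, ?_⟩
    · intro h
      have := congrFun h i
      simp at this
    · funext a
      rw [Matrix.mulVec_diagonal]
      by_cases h : a = i <;> simp [Pi.single_apply, h]

lemma lamMax_diag_le {k : ℕ} (d : Fin k → ℝ) {c : ℝ} (h : ∀ i, d i ≤ c) (hc : 0 ≤ c) :
    lamMax (Matrix.diagonal fun i => (d i : ℂ)) ≤ c := by
  rw [lamMax, eigenSet_diagonal]
  exact Real.sSup_le (by rintro r ⟨i, rfl⟩; exact h i) hc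

lemma le_lamMax_diag {k : ℕ} (d : Fin k → ℝ) (i : Fin k) :
    d i ≤ lamMax (Matrix.diagonal fun i => (d i : ℂ)) := by
  rw [lamMax, eigenSet_diagonal]
  exact le_csSup (Set.finite_range d).bddAbove ⟨i, rfl⟩

lemma sum_smul_diag {Θ : Type*} [Fintype Θ] {k : ℕ} (g : Θ → Fin k → ℝ) (x : Θ → ℝ) :
    (∑ θ, (x θ : ℂ) • Matrix.diagonal fun i => (g θ i : ℂ)) =
      Matrix.diagonal fun i => ((∑ θ, x θ * g θ i : ℝ) : ℂ) := by
  ext a b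
  by_cases h : a = b
  · subst h
    simp [Matrix.sum_apply]
  · simp [Matrix.sum_apply, Matrix.diagonal_apply_ne _ h]

lemma psd_add {k : ℕ} {A B : Matrix (Fin k) (Fin k) ℂ} (hA : A.PosSemidef)
    (hB : B.PosSemidef) : (A + B).PosSemidef :=
  ⟨hA.1.add hB.1, fun x => by
    simpa [mul_add, add_mul] using add_nonneg (hA.2 x) (hB.2 x)⟩

lemma psd_zero {k : ℕ} : (0 : Matrix (Fin k) (Fin k) ℂ).PosSemidef :=
  ⟨Matrix.isHermitian_zero, fun x => by simp⟩

lemma psd_sum {ι : Type*} {k : ℕ} (s : Finset ι) (f : ι → Matrix (Fin k) (Fin k) ℂ)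
    (h : ∀ i ∈ s, (f i).PosSemidef) : (∑ i ∈ s, f i).PosSemidef := by
  classical
  induction s using Finset.induction_on with
  | empty => simpa using psd_zero
  | insert _ _ hni ih =>
      rw [Finset.sum_insert hni]
      exact psd_add (h _ (Finset.mem_insert_self _ _))
        (ih fun i hi => h i (Finset.mem_insert_of_mem hi))

lemma psd_smul {k : ℕ} {A : Matrix (Fin k) (Fin k) ℂ} (hA : A.PosSemidef) {c : ℝ}
    (hc : 0 ≤ c) : ((c : ℂ) • A).PosSemidef := by
  refine ⟨?_, fun x => ?_⟩
  · have := hA.1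
    unfold Matrix.IsHermitian at this ⊢
    rw [Matrix.conjTranspose_smul, this]
    congr 1
    simp [Complex.star_def, Complex.conj_ofReal]
  · exact (hA.smul (by exact_mod_cast hc : (0:ℂ) ≤ (c:ℂ))).2 x

lemma psd_entry {k : ℕ} {A : Matrix (Fin k) (Fin k) ℂ} (hA : A.PosSemidef) (j : Fin k) :
    0 ≤ A j j := by
  have := hA.dotProduct_mulVec_nonneg (Pi.single j 1)
  simpa [Matrix.mulVec, dotProduct, Pi.single_apply] using this

lemma kraus_term {n m : ℕ} (j : Fin m) (i : Fin n) (r : ℝ)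
    (X : Matrix (Fin n) (Fin n) ℂ) :
    ((r : ℂ) • Matrix.single j i (1 : ℂ)) * X *
        ((r : ℂ) • Matrix.single j i (1 : ℂ))ᴴ =
      ((r ^ 2 : ℝ) : ℂ) • X i i • Matrix.single j j (1 : ℂ) := by
  ext a b
  by_cases ha : j = a
  · subst ha
    by_cases hb : j = b
    · subst hb
      simp [Matrix.mul_apply, Matrix.single, Matrix.conjTranspose_apply,
        ite_and, Complex.conj_ofReal]
      rw [Finset.sum_eq_single i]
      · simp; ring
      · intro c _ hc
        rw [if_neg (fun h => hc h.symm), map_zero, mul_zero]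
      · simp
    · simp [Matrix.mul_apply, Matrix.single, Matrix.conjTranspose_apply,
        ite_and, Complex.conj_ofReal, hb]
  · simp [Matrix.mul_apply, Matrix.single, Matrix.conjTranspose_apply,
      ite_and, Complex.conj_ofReal, ha]

lemma diagonal_eq_sum_std {m : ℕ} (d : Fin m → ℂ) :
    Matrix.diagonal d = ∑ j, d j • Matrix.single j j (1 : ℂ) := by
  ext a b
  by_cases h : a = b
  · subst h
    simp [Matrix.sum_apply, Matrix.single, Finset.sum_ite_eq, ite_and]
  · rw [Matrix.diagonal_apply_ne _ h, Matrix.sum_apply]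
    symm
    apply Finset.sum_eq_zero
    intro c _
    rw [Matrix.smul_apply, Matrix.single_apply_of_ne, smul_zero]
    rintro ⟨rfl, rfl⟩
    exact h rfl

theorem stmt15 {Θ : Type*} [Fintype Θ] {n m : ℕ}
    (l : Θ → Fin n → ℝ) (mc : Θ → Fin m → ℝ) :
    (∃ Λ : Matrix (Fin n) (Fin n) ℂ →ₗ[ℂ] Matrix (Fin m) (Fin m) ℂ,
        IsCPMap Λ ∧ IsSubunital Λ ∧
        ∀ θ, Λ (Matrix.diagonal fun i => (l θ i : ℂ)) =
              Matrix.diagonal fun j => (mc θ j : ℂ)) ↔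
      ∀ x : Θ → ℝ,
        max (lamMax (∑ θ, (x θ : ℂ) • Matrix.diagonal fun i => (l θ i : ℂ))) 0 ≥
          max (lamMax (∑ θ, (x θ : ℂ) • Matrix.diagonal fun j => (mc θ j : ℂ))) 0 := by
  classical
  constructor
  · rintro ⟨Λ, ⟨k, W, hW⟩, hsub, hmap⟩ x
    rw [sum_smul_diag l x, sum_smul_diag mc x]
    set a : Fin n → ℝ := fun i => ∑ θ, x θ * l θ i with ha
    set b : Fin m → ℝ := fun j => ∑ θ, x θ * mc θ j with hb
    set c : ℝ := max (lamMax (Matrix.diagonal fun i => (a i : ℂ))) 0 with hc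
    have hc0 : 0 ≤ c := le_max_right _ _
    have hac : ∀ i, a i ≤ c := fun i => le_trans (le_lamMax_diag a i) (le_max_left _ _)
    have hΛL : Λ (Matrix.diagonal fun i => (a i : ℂ)) =
        Matrix.diagonal fun j => (b j : ℂ) := by
      have h0 : (∑ θ, (x θ : ℂ) • Matrix.diagonal fun i => (l θ i : ℂ)) =
          Matrix.diagonal fun i => (a i : ℂ) := sum_smul_diag l x
      have h0' : (∑ θ, (x θ : ℂ) • Matrix.diagonal fun j => (mc θ j : ℂ)) =
          Matrix.diagonal fun j => (b j : ℂ) := sum_smul_diag mc x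
      rw [← h0, ← h0', map_sum]
      exact Finset.sum_congr rfl fun θ _ => by rw [LinearMap.map_smul, hmap θ]
    have hA : ((c : ℂ) • 1 - Matrix.diagonal fun i => (a i : ℂ)).PosSemidef := by
      have hEq : ((c : ℂ) • (1 : Matrix (Fin n) (Fin n) ℂ) -
          Matrix.diagonal fun i => (a i : ℂ)) =
          Matrix.diagonal fun i => ((c - a i : ℝ) : ℂ) := by
        ext p q
        by_cases h : p = q
        · subst h
          simp [Matrix.one_apply]
        · simp [Matrix.one_apply_ne h, Matrix.diagonal_apply_ne _ h]
      rw [hEq]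
      exact Matrix.posSemidef_diagonal_iff.mpr fun i =>
        Complex.zero_le_real.mpr (sub_nonneg.mpr (hac i))
    have hΛA : (Λ ((c : ℂ) • 1 - Matrix.diagonal fun i => (a i : ℂ))).PosSemidef := by
      rw [hW]
      exact psd_sum _ _ fun i _ => hA.mul_mul_conjTranspose_same (W i)
    have h1 : ((c : ℂ) • 1 - Matrix.diagonal fun j => (b j : ℂ)).PosSemidef := by
      have h2 : ((c : ℂ) • ((1 : Matrix (Fin m) (Fin m) ℂ) - Λ 1)).PosSemidef :=
        psd_smul hsub hc0
      have h3 := psd_add hΛA h2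
      have h4 : Λ ((c : ℂ) • 1 - Matrix.diagonal fun i => (a i : ℂ)) +
          (c : ℂ) • ((1 : Matrix (Fin m) (Fin m) ℂ) - Λ 1) =
          (c : ℂ) • 1 - Matrix.diagonal fun j => (b j : ℂ) := by
        rw [map_sub, LinearMap.map_smul, hΛL, smul_sub]
        abel
      rwa [h4] at h3
    have hbc : ∀ j, b j ≤ c := by
      intro j
      have he := psd_entry h1 j
      have he2 : ((c : ℂ) • (1 : Matrix (Fin m) (Fin m) ℂ) -
          Matrix.diagonal fun j => (b j : ℂ)) j j = ((c - b j : ℝ) : ℂ) := by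
        simp [Matrix.one_apply]
      rw [he2] at he
      have := Complex.zero_le_real.mp he
      linarith
    exact max_le (lamMax_diag_le b hbc hc0) hc0
  · intro hyp
    set v : Fin n → Θ → ℝ := fun i θ => l θ i with hv
    set S : Set (Fin n → ℝ) := {p | (∀ i, 0 ≤ p i) ∧ ∑ i, p i ≤ 1} with hS
    let T : (Fin n → ℝ) →ₗ[ℝ] (Θ → ℝ) :=
      { toFun := fun p => ∑ i, p i • v i
        map_add' := fun p q => by
          simp [add_smul, Finset.sum_add_distrib]
        map_smul' := fun c p => by
          simp [smul_smul, Finset.smul_sum] }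
    have hT : ∀ q : Fin n → ℝ, T q = ∑ i, q i • v i := fun _ => rfl
    have hSconv : Convex ℝ S := by
      rintro p ⟨hp1, hp2⟩ q ⟨hq1, hq2⟩ α β hα hβ hαβ
      refine ⟨fun i => add_nonneg (mul_nonneg hα (hp1 i)) (mul_nonneg hβ (hq1 i)), ?_⟩
      have hsum : ∑ i, (α • p + β • q) i = α * ∑ i, p i + β * ∑ i, q i := by
        simp [Finset.mul_sum, Finset.sum_add_distrib]
      rw [hsum]
      have h1 : α * ∑ i, p i ≤ α * 1 := mul_le_mul_of_nonneg_left hp2 hα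
      have h2 : β * ∑ i, q i ≤ β * 1 := mul_le_mul_of_nonneg_left hq2 hβ
      linarith
    have hSclosed : IsClosed S := by
      have : S = (⋂ i, {p : Fin n → ℝ | 0 ≤ p i}) ∩ {p | ∑ i, p i ≤ 1} := by
        ext p; simp [hS, Set.mem_iInter]
      rw [this]
      exact IsClosed.inter
        (isClosed_iInter fun i => isClosed_le continuous_const (continuous_apply i))
        (isClosed_le (continuous_finset_sum _ fun i _ => continuous_apply i)
          continuous_const)
    have hSbdd : Bornology.IsBounded S := by
      refine (Metric.isBounded_closedBall (x := (0 : Fin n → ℝ)) (r := 1)).subset ?_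
      intro p hp
      rw [Metric.mem_closedBall, dist_zero_right]
      refine (pi_norm_le_iff_of_nonneg zero_le_one).mpr fun i => ?_
      rw [Real.norm_eq_abs, abs_of_nonneg (hp.1 i)]
      exact le_trans (Finset.single_le_sum (fun i _ => hp.1 i) (Finset.mem_univ i)) hp.2
    have hCcompact : IsCompact (T '' S) :=
      (Metric.isCompact_of_isClosed_isBounded hSclosed hSbdd).image
        T.continuous_of_finiteDimensional
    have hCconv : Convex ℝ (T '' S) := hSconv.linear_image T
    have hmem : ∀ j : Fin m, (fun θ => mc θ j) ∈ T '' S := by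
      intro j
      by_contra hnot
      obtain ⟨f, u, hfu, hu⟩ :=
        geometric_hahn_banach_closed_point hCconv hCcompact.isClosed hnot
      set x : Θ → ℝ := fun θ => f (Pi.single θ 1) with hx
      have hf : ∀ w : Θ → ℝ, f w = ∑ θ, w θ * x θ := by
        intro w
        conv_lhs => rw [← Finset.univ_sum_single w]
        rw [map_sum]
        refine Finset.sum_congr rfl fun θ _ => ?_
        have hsingle : Pi.single θ (w θ) = w θ • (Pi.single θ 1 : Θ → ℝ) := by
          funext t; by_cases h : t = θ <;> simp [Pi.single_apply, h]
        rw [hsingle, f.map_smul, smul_eq_mul]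
      have hu0 : 0 < u := by
        have h0 : (0 : Θ → ℝ) ∈ T '' S :=
          ⟨0, ⟨fun i => le_refl 0, by simp⟩, map_zero T⟩
        have := hfu _ h0
        simpa using this
      have hvmem : ∀ i, v i ∈ T '' S := by
        intro i
        refine ⟨Pi.single i 1, ⟨fun i' => ?_, by simp⟩, ?_⟩
        · by_cases h : i' = i <;> simp [Pi.single_apply, h]
        · rw [hT]
          rw [Finset.sum_eq_single i]
          · simp
          · intro i' _ h
            simp [Pi.single_apply, h]
          · simp
      have key := hyp x
      rw [sum_smul_diag l x, sum_smul_diag mc x] at key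
      have hA : ∀ i, (∑ θ, x θ * l θ i) ≤ u := by
        intro i
        have h1 := hfu _ (hvmem i)
        rw [hf (v i)] at h1
        calc (∑ θ, x θ * l θ i) = ∑ θ, v i θ * x θ :=
              Finset.sum_congr rfl fun θ _ => mul_comm _ _
          _ ≤ u := le_of_lt h1
      have hL : max (lamMax (Matrix.diagonal fun i => ((∑ θ, x θ * l θ i : ℝ) : ℂ))) 0
          ≤ u := max_le (lamMax_diag_le _ hA hu0.le) hu0.le
      have hM : u < max
          (lamMax (Matrix.diagonal fun j => ((∑ θ, x θ * mc θ j : ℝ) : ℂ))) 0 := by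
        have h1 : u < ∑ θ, x θ * mc θ j := by
          rw [hf] at hu
          calc u < ∑ θ, mc θ j * x θ := hu
            _ = ∑ θ, x θ * mc θ j := by
                exact Finset.sum_congr rfl fun θ _ => mul_comm _ _
        exact lt_of_lt_of_le h1
          (le_trans (le_lamMax_diag (fun j => ∑ θ, x θ * mc θ j) j) (le_max_left _ _))
      linarith [le_trans hL (le_of_lt hM)]
    choose p hpS hpT using fun j => hmem j
    have hp1 : ∀ j i, 0 ≤ p j i := fun j => (hpS j).1
    have hp2 : ∀ j, ∑ i, p j i ≤ 1 := fun j => (hpS j).2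
    have hp3 : ∀ j θ, ∑ i, p j i * l θ i = mc θ j := by
      intro j θ
      have h' := hpT j
      rw [hT] at h'
      simpa [Finset.sum_apply] using congrFun h' θ
    refine ⟨{ toFun := fun X => Matrix.diagonal fun j => ∑ i, (p j i : ℂ) * X i i
              map_add' := fun X Y => by
                rw [Matrix.diagonal_add]
                funext j
                simp [Matrix.add_apply, mul_add, Finset.sum_add_distrib]
              map_smul' := fun cc X => by
                simp only [RingHom.id_apply]
                rw [← Matrix.diagonal_smul]
                refine congrArg Matrix.diagonal (funext fun j => ?_)
                rw [Pi.smul_apply, smul_eq_mul, Finset.mul_sum]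
                exact Finset.sum_congr rfl fun i _ => by
                  rw [Matrix.smul_apply, smul_eq_mul]; ring }, ?_, ?_, ?_⟩
    · -- IsCPMap
      refine ⟨m * n, fun t =>
        ((Real.sqrt (p (finProdFinEquiv.symm t).1 (finProdFinEquiv.symm t).2) : ℂ) •
          Matrix.single (finProdFinEquiv.symm t).1 (finProdFinEquiv.symm t).2
            (1 : ℂ)), fun X => ?_⟩
      show Matrix.diagonal (fun j => ∑ i, (p j i : ℂ) * X i i) = _
      rw [Equiv.sum_comp (finProdFinEquiv.symm : Fin (m * n) ≃ Fin m × Fin n)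
        (fun q : Fin m × Fin n =>
          ((Real.sqrt (p q.1 q.2) : ℂ) • Matrix.single q.1 q.2 (1 : ℂ)) * X *
            ((Real.sqrt (p q.1 q.2) : ℂ) • Matrix.single q.1 q.2 (1 : ℂ))ᴴ)]
      have hterm : ∀ q : Fin m × Fin n,
          ((Real.sqrt (p q.1 q.2) : ℂ) • Matrix.single q.1 q.2 (1 : ℂ)) * X *
            ((Real.sqrt (p q.1 q.2) : ℂ) • Matrix.single q.1 q.2 (1 : ℂ))ᴴ =
          ((p q.1 q.2 : ℂ) * X q.2 q.2) • Matrix.single q.1 q.1 (1 : ℂ) := by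
        intro q
        rw [kraus_term]
        rw [Real.sq_sqrt (hp1 q.1 q.2), smul_smul]
      simp only [hterm]
      rw [Fintype.sum_prod_type]
      rw [diagonal_eq_sum_std]
      exact Finset.sum_congr rfl fun j _ => by
        rw [Finset.sum_smul]
    · -- IsSubunital
      show ((1 : Matrix (Fin m) (Fin m) ℂ) -
        Matrix.diagonal fun j => ∑ i, (p j i : ℂ) * (1 : Matrix (Fin n) (Fin n) ℂ) i i
        ).PosSemidef
      have hEq : ((1 : Matrix (Fin m) (Fin m) ℂ) -
          Matrix.diagonal fun j => ∑ i, (p j i : ℂ)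
            * (1 : Matrix (Fin n) (Fin n) ℂ) i i) =
          Matrix.diagonal fun j => ((1 - ∑ i, p j i : ℝ) : ℂ) := by
        ext q r
        by_cases h : q = r
        · subst h
          simp [Matrix.one_apply]
        · simp [Matrix.one_apply_ne h, Matrix.diagonal_apply_ne _ h]
      rw [hEq]
      exact Matrix.posSemidef_diagonal_iff.mpr fun j =>
        Complex.zero_le_real.mpr (by linarith [hp2 j])
    · -- maps L to M
      intro θ
      show Matrix.diagonal (fun j => ∑ i, (p j i : ℂ) *
          (Matrix.diagonal fun i => (l θ i : ℂ)) i i) = _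
      refine congrArg Matrix.diagonal (funext fun j => ?_)
      rw [← hp3 j θ]
      push_cast
      exact Finset.sum_congr rfl fun i _ => by rw [Matrix.diagonal_apply_eq]
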